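/- arXiv:2205.00431 — 2 statements merged into one kernel-verified Lean document; each statement's English description precedes it below -/
import Mathlib

section
/- Consider the switched linear system ẇ = (I_N ⊗ A₀ − μ L_{σ(t)} ⊗ I_{n₀}) w, where each L_p is the Laplacian of a connected undirected graph, σ is piecewise constant, and μ ≥ ‖A₀‖/λ̲ + 1 with λ̲ = min_p λ₂(L_p) > 0. Then the disagreement vector w̃(t) = w(t) − 𝟏 ⊗ w_av(t), with w_av(t) = (1/N)Σᵢ wᵢ(t), satisfies ‖w̃(t)‖ ≤ ‖w̃(0)‖ e^{−λ̲ t} for all t ≥ 0. -/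
open Matrix Kronecker

lemma quad_bound {n : ℕ} (A : Matrix (Fin n) (Fin n) ℝ) (x : Fin n → ℝ) :
    x ⬝ᵥ A.mulVec x ≤ ‖Matrix.toEuclideanCLM (𝕜 := ℝ) A‖ * ∑ i, x i ^ 2 := by
  set T := Matrix.toEuclideanCLM (𝕜 := ℝ) A
  set X : EuclideanSpace ℝ (Fin n) := (WithLp.equiv 2 _).symm x
  have hTX : T X = (WithLp.equiv 2 _).symm (A.mulVec x) := by
    simp [T, X, Matrix.toEuclideanCLM_toLp, Matrix.toLin'_apply]
  have h1 : x ⬝ᵥ A.mulVec x = inner ℝ X (T X) := by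
    rw [hTX]
    simp only [PiLp.inner_apply, RCLike.inner_apply, conj_trivial]
    exact Finset.sum_congr rfl fun i _ => mul_comm _ _
  have h2 : (inner ℝ X (T X) : ℝ) ≤ ‖X‖ * ‖T X‖ := real_inner_le_norm _ _
  have h3 : ‖T X‖ ≤ ‖T‖ * ‖X‖ := T.le_opNorm X
  have h4 : ‖X‖ ^ 2 = ∑ i, x i ^ 2 := by
    rw [← real_inner_self_eq_norm_sq]
    simp only [PiLp.inner_apply, RCLike.inner_apply, conj_trivial]
    exact Finset.sum_congr rfl fun i _ => (sq (x i)).symm ▸ rfl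
  nlinarith [norm_nonneg X, norm_nonneg (T X), norm_nonneg T]

lemma kron_mulVec {N n₀ : ℕ} (A₀ : Matrix (Fin n₀) (Fin n₀) ℝ)
    (Lq : Matrix (Fin N) (Fin N) ℝ) (μ : ℝ) (v : Fin N × Fin n₀ → ℝ)
    (i : Fin N) (k : Fin n₀) :
    (((1 : Matrix (Fin N) (Fin N) ℝ) ⊗ₖ A₀
        - μ • (Lq ⊗ₖ (1 : Matrix (Fin n₀) (Fin n₀) ℝ))).mulVec v) (i, k)
      = (∑ l, A₀ k l * v (i, l)) - μ * ∑ j, Lq i j * v (j, k) := by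
  simp [Matrix.mulVec, dotProduct, Fintype.sum_prod_type, Matrix.one_apply,
    sub_mul, Finset.sum_sub_distrib, ite_mul, Finset.mul_sum, mul_assoc]

/-- Exponential decay of the disagreement vector for the switched consensus
generator `ẇ = (I_N ⊗ A₀ − μ L_{σ(t)} ⊗ I_{n₀}) w` over connected-graph
Laplacians, with coupling gain `μ ≥ ‖A₀‖/λ̲ + 1`. -/
theorem switched_consensus_disagreement_decay {N n₀ p : ℕ} (hN : 0 < N)
    (A₀ : Matrix (Fin n₀) (Fin n₀) ℝ)
    (G : Fin p → SimpleGraph (Fin N)) [∀ q, DecidableRel (G q).Adj]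
    (hconn : ∀ q, (G q).Connected)
    (L : Fin p → Matrix (Fin N) (Fin N) ℝ) (hLdef : ∀ q, L q = (G q).lapMatrix ℝ)
    (lam : ℝ) (hlam : 0 < lam)
    (hgap : ∀ q, ∀ x : Fin N → ℝ, (∑ i, x i) = 0 →
      lam * (∑ i, (x i) ^ 2) ≤ x ⬝ᵥ (L q).mulVec x)
    (μ : ℝ) (hμ : ‖Matrix.toEuclideanCLM (𝕜 := ℝ) A₀‖ / lam + 1 ≤ μ)
    (σ : ℝ → Fin p)
    (w : ℝ → Fin N × Fin n₀ → ℝ)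
    (hw : ∀ t : ℝ, HasDerivAt w
      ((((1 : Matrix (Fin N) (Fin N) ℝ) ⊗ₖ A₀
          - μ • (L (σ t) ⊗ₖ (1 : Matrix (Fin n₀) (Fin n₀) ℝ))).mulVec (w t))) t)
    (wav : ℝ → Fin n₀ → ℝ)
    (hwav : ∀ t k, wav t k = (N : ℝ)⁻¹ * ∑ i : Fin N, w t (i, k))
    (wtil : ℝ → Fin N × Fin n₀ → ℝ)
    (hwtil : ∀ t q, wtil t q = w t q - wav t q.2) :
    ∀ t : ℝ, 0 ≤ t →
      Real.sqrt (∑ q, (wtil t q) ^ 2)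
        ≤ Real.sqrt (∑ q, (wtil 0 q) ^ 2) * Real.exp (-lam * t) := by
  have hNR : (N : ℝ) ≠ 0 := Nat.cast_ne_zero.mpr hN.ne'
  set nA := ‖Matrix.toEuclideanCLM (𝕜 := ℝ) A₀‖ with hnA
  have hnA0 : 0 ≤ nA := norm_nonneg _
  -- the driving vector field
  set F : ℝ → Fin N × Fin n₀ → ℝ := fun t =>
    (((1 : Matrix (Fin N) (Fin N) ℝ) ⊗ₖ A₀
        - μ • (L (σ t) ⊗ₖ (1 : Matrix (Fin n₀) (Fin n₀) ℝ))).mulVec (w t)) with hF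
  have hwq : ∀ t (q : Fin N × Fin n₀), HasDerivAt (fun s => w s q) (F t q) t :=
    fun t q => hasDerivAt_pi.mp (hw t) q
  -- zero average of the disagreement vector
  have zsum : ∀ t k, ∑ i, wtil t (i, k) = 0 := by
    intro t k
    simp only [hwtil, hwav]
    rw [Finset.sum_sub_distrib, Finset.sum_const, Finset.card_univ, Fintype.card_fin,
      nsmul_eq_mul]
    field_simp
    ring
  -- derivative of each component of wtil
  set Fav : ℝ → Fin n₀ → ℝ := fun t k => (N : ℝ)⁻¹ * ∑ i, F t (i, k) with hFav
  have hwtilD : ∀ t q, HasDerivAt (fun s => wtil s q) (F t q - Fav t q.2) t := by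
    intro t q
    have key : (fun s => wtil s q)
        = fun s => w s q - (N : ℝ)⁻¹ * ∑ i, w s (i, q.2) := by
      funext s; rw [hwtil, hwav]
    rw [key]
    exact (hwq t q).sub ((HasDerivAt.fun_sum (fun i _ => hwq t (i, q.2))).const_mul _)
  -- derivative of the Lyapunov function
  set Vf : ℝ → ℝ := fun s => ∑ q, (wtil s q) ^ 2 with hVf
  set D : ℝ → ℝ := fun t => ∑ q, 2 * wtil t q * (F t q - Fav t q.2) with hD
  have hVD : ∀ t, HasDerivAt Vf (D t) t := by
    intro t
    apply HasDerivAt.fun_sum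
    intro q _
    have := (hwtilD t q).fun_pow 2
    simpa [pow_one, mul_assoc, mul_comm, mul_left_comm] using this
  have hV0 : ∀ t, 0 ≤ Vf t := fun t => Finset.sum_nonneg fun q _ => sq_nonneg _
  -- the key differential inequality
  have key : ∀ t, D t ≤ (-2 * lam) * Vf t := by
    intro t
    set Lq := L (σ t) with hLq
    have hrow : ∀ i, ∑ j, Lq i j = 0 := by
      intro i
      have h0 : Lq.mulVec (fun _ => (1 : ℝ)) = 0 := by
        rw [hLq, hLdef (σ t)]; exact SimpleGraph.lapMatrix_mulVec_const_eq_zero (G := G (σ t))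
      have := congrFun h0 i
      simpa [Matrix.mulVec, dotProduct] using this
    have hwS : ∀ (j : Fin N) (l : Fin n₀), w t (j, l) = wtil t (j, l) + wav t l := by
      intro j l; rw [hwtil]; ring
    -- pointwise expansion
    have e1 : ∀ (i : Fin N) (k : Fin n₀), wtil t (i, k) * F t (i, k)
        = wtil t (i, k) * (∑ l, A₀ k l * wtil t (i, l))
          + wtil t (i, k) * (∑ l, A₀ k l * wav t l)
          - μ * (wtil t (i, k) * (∑ j, Lq i j * wtil t (j, k))) := by
      intro i k
      have hFik : F t (i, k)
          = (∑ l, A₀ k l * w t (i, l)) - μ * ∑ j, Lq i j * w t (j, k) := by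
        rw [hF]; exact kron_mulVec A₀ Lq μ (w t) i k
      rw [hFik]
      have hA : (∑ l, A₀ k l * w t (i, l))
          = (∑ l, A₀ k l * wtil t (i, l)) + (∑ l, A₀ k l * wav t l) := by
        rw [← Finset.sum_add_distrib]
        exact Finset.sum_congr rfl fun l _ => by rw [hwS]; ring
      have hB : (∑ j, Lq i j * w t (j, k))
          = (∑ j, Lq i j * wtil t (j, k)) + (∑ j, Lq i j) * wav t k := by
        rw [Finset.sum_mul, ← Finset.sum_add_distrib]
        exact Finset.sum_congr rfl fun j _ => by rw [hwS]; ring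
      rw [hA, hB, hrow]
      ring
    -- sum of wtil against the average part vanishes
    have hAvg : ∑ q : Fin N × Fin n₀, wtil t q * Fav t q.2 = 0 := by
      rw [show (∑ q : Fin N × Fin n₀, wtil t q * Fav t q.2)
          = ∑ i, ∑ k, wtil t (i, k) * Fav t k from
        Fintype.sum_prod_type (f := fun q : Fin N × Fin n₀ => wtil t q * Fav t q.2)]
      rw [Finset.sum_comm]
      apply Finset.sum_eq_zero
      intro k _
      have : ∑ x : Fin N, wtil t (x, k) * Fav t (x, k).2
          = (∑ x : Fin N, wtil t (x, k)) * Fav t k := by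
        rw [Finset.sum_mul]
      rw [this, zsum, zero_mul]
    -- full expansion of the quadratic form derivative
    have hsum : ∑ q : Fin N × Fin n₀, wtil t q * F t q
        = (∑ i, (fun l => wtil t (i, l)) ⬝ᵥ A₀.mulVec (fun l => wtil t (i, l)))
          - μ * ∑ k, (fun j => wtil t (j, k)) ⬝ᵥ Lq.mulVec (fun j => wtil t (j, k)) := by
      rw [Fintype.sum_prod_type]
      have step1 : ∀ i : Fin N, ∑ k, wtil t (i, k) * F t (i, k)
          = (∑ k, wtil t (i, k) * (∑ l, A₀ k l * wtil t (i, l)))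
            + (∑ k, wtil t (i, k) * (∑ l, A₀ k l * wav t l))
            - μ * ∑ k, wtil t (i, k) * (∑ j, Lq i j * wtil t (j, k)) := by
        intro i
        rw [Finset.mul_sum, ← Finset.sum_add_distrib, ← Finset.sum_sub_distrib]
        exact Finset.sum_congr rfl fun k _ => e1 i k
      rw [Finset.sum_congr rfl fun i _ => step1 i]
      rw [Finset.sum_sub_distrib, Finset.sum_add_distrib]
      have hz : ∑ i, ∑ k, wtil t (i, k) * (∑ l, A₀ k l * wav t l) = 0 := by
        rw [Finset.sum_comm]
        apply Finset.sum_eq_zero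
        intro k _
        rw [← Finset.sum_mul, zsum, zero_mul]
      rw [hz, add_zero, ← Finset.mul_sum]
      have hA' : (∑ i, ∑ k, wtil t (i, k) * (∑ l, A₀ k l * wtil t (i, l)))
          = ∑ i, (fun l => wtil t (i, l)) ⬝ᵥ A₀.mulVec (fun l => wtil t (i, l)) := rfl
      have hL' : (∑ i, ∑ k, wtil t (i, k) * (∑ j, Lq i j * wtil t (j, k)))
          = ∑ k, (fun j => wtil t (j, k)) ⬝ᵥ Lq.mulVec (fun j => wtil t (j, k)) := by
        rw [Finset.sum_comm]
        rfl
      rw [hA', hL']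
    -- bounds on the two quadratic forms
    have hb1 : (∑ i, (fun l => wtil t (i, l)) ⬝ᵥ A₀.mulVec (fun l => wtil t (i, l)))
        ≤ nA * Vf t := by
      calc (∑ i, (fun l => wtil t (i, l)) ⬝ᵥ A₀.mulVec (fun l => wtil t (i, l)))
          ≤ ∑ i, nA * ∑ l, (wtil t (i, l)) ^ 2 :=
            Finset.sum_le_sum fun i _ => quad_bound A₀ _
        _ = nA * Vf t := by
            rw [← Finset.mul_sum]
            congr 1
            exact (Fintype.sum_prod_type (f := fun q : Fin N × Fin n₀ => wtil t q ^ 2)).symm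
    have hb2 : lam * Vf t
        ≤ ∑ k, (fun j => wtil t (j, k)) ⬝ᵥ Lq.mulVec (fun j => wtil t (j, k)) := by
      have : ∀ k : Fin n₀, lam * ∑ j, (wtil t (j, k)) ^ 2
          ≤ (fun j => wtil t (j, k)) ⬝ᵥ Lq.mulVec (fun j => wtil t (j, k)) := by
        intro k
        exact hgap (σ t) _ (zsum t k)
      calc lam * Vf t = ∑ k, lam * ∑ j, (wtil t (j, k)) ^ 2 := by
            rw [← Finset.mul_sum]
            congr 1
            exact (Fintype.sum_prod_type (f := fun q : Fin N × Fin n₀ => wtil t q ^ 2)).trans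
              Finset.sum_comm
        _ ≤ _ := Finset.sum_le_sum fun k _ => this k
    -- arithmetic
    have hD2 : D t = 2 * ∑ q : Fin N × Fin n₀, wtil t q * F t q - 2 * 0 := by
      rw [hD, ← hAvg, Finset.mul_sum, Finset.mul_sum, ← Finset.sum_sub_distrib]
      exact Finset.sum_congr rfl fun q _ => by ring
    have hμl : nA + lam ≤ μ * lam := by
      have h := mul_le_mul_of_nonneg_right hμ hlam.le
      rw [add_mul, div_mul_cancel₀ _ hlam.ne', one_mul] at h
      exact h
    have hμ1 : (1 : ℝ) ≤ μ := by
      have h0 : 0 ≤ nA / lam := div_nonneg hnA0 hlam.le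
      linarith
    rw [hD2, hsum]
    have hT2 : μ * (lam * Vf t)
        ≤ μ * ∑ k, (fun j => wtil t (j, k)) ⬝ᵥ Lq.mulVec (fun j => wtil t (j, k)) :=
      mul_le_mul_of_nonneg_left hb2 (le_trans zero_le_one hμ1)
    nlinarith [hV0 t, mul_le_mul_of_nonneg_right hμl (hV0 t)]
  -- Gronwall argument
  set g : ℝ → ℝ := fun s => Vf s * Real.exp (2 * lam * s) with hg
  have hgD : ∀ s : ℝ, HasDerivAt g
      (D s * Real.exp (2 * lam * s) + Vf s * (Real.exp (2 * lam * s) * (2 * lam))) s := by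
    intro s
    have he : HasDerivAt (fun u : ℝ => Real.exp (2 * lam * u))
        (Real.exp (2 * lam * s) * (2 * lam)) s := by
      simpa using (((hasDerivAt_id s).const_mul (2 * lam)).exp)
    exact (hVD s).mul he
  have hganti : Antitone g := by
    apply antitone_of_deriv_nonpos
    · exact fun s => (hgD s).differentiableAt
    · intro s
      rw [(hgD s).deriv]
      have hE : 0 < Real.exp (2 * lam * s) := Real.exp_pos _
      nlinarith [key s, hV0 s]
  intro t ht
  have hgle : Vf t * Real.exp (2 * lam * t) ≤ Vf 0 := by
    have := hganti ht
    simpa [hg] using this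
  have hVle : Vf t ≤ Vf 0 * Real.exp (-(2 * lam) * t) := by
    have hE : 0 < Real.exp (2 * lam * t) := Real.exp_pos _
    rw [neg_mul, Real.exp_neg, ← div_eq_mul_inv, le_div_iff₀ hE]
    exact hgle
  calc Real.sqrt (Vf t) ≤ Real.sqrt (Vf 0 * Real.exp (-(2 * lam) * t)) :=
        Real.sqrt_le_sqrt hVle
    _ = Real.sqrt (Vf 0) * Real.exp (-lam * t) := by
        rw [Real.sqrt_mul (hV0 0), ← Real.exp_half]
        congr 1
        ring
end

section
/- If Q ≻ 0 is symmetric positive definite and QAᵀ + AQ − 2BBᵀ ≺ 0 (negative definite), then the matrix A − BBᵀQ^{-1} is Hurwitz (all eigenvalues have negative real part). -/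
open Matrix

lemma re_dotProduct_map_lemma {k : ℕ} (M : Matrix (Fin k) (Fin k) ℝ) (x : Fin k → ℂ) :
    (star x ⬝ᵥ ((M.map Complex.ofReal) *ᵥ x)).re =
      (fun i => (x i).re) ⬝ᵥ (M *ᵥ fun i => (x i).re) +
      (fun i => (x i).im) ⬝ᵥ (M *ᵥ fun i => (x i).im) := by
  simp [dotProduct, mulVec, Complex.mul_re, Finset.mul_sum, Finset.sum_add_distrib]

lemma re_dotProduct_map_pos {k : ℕ} {M : Matrix (Fin k) (Fin k) ℝ} (hM : M.PosDef)
    {x : Fin k → ℂ} (hx : x ≠ 0) :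
    0 < (star x ⬝ᵥ ((M.map Complex.ofReal) *ᵥ x)).re := by
  rw [re_dotProduct_map_lemma]
  set a : Fin k → ℝ := fun i => (x i).re with ha
  set b : Fin k → ℝ := fun i => (x i).im with hb
  have hab : a ≠ 0 ∨ b ≠ 0 := by
    by_contra h
    push_neg at h
    apply hx
    funext i
    have h1 := congrFun h.1 i
    have h2 := congrFun h.2 i
    simp [ha, hb] at h1 h2
    exact Complex.ext h1 h2
  have hsa : 0 ≤ a ⬝ᵥ M *ᵥ a := hM.posSemidef.dotProduct_mulVec_nonneg a
  have hsb : 0 ≤ b ⬝ᵥ M *ᵥ b := hM.posSemidef.dotProduct_mulVec_nonneg b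
  rcases hab with h | h
  · have := hM.dotProduct_mulVec_pos h; simp only [star_trivial] at this
    linarith [this]
  · have := hM.dotProduct_mulVec_pos h; simp only [star_trivial] at this
    linarith [this]

lemma map_mul_ofReal {k l o : ℕ} (L : Matrix (Fin k) (Fin l) ℝ) (M : Matrix (Fin l) (Fin o) ℝ) :
    (L * M).map Complex.ofReal = L.map Complex.ofReal * M.map Complex.ofReal :=
  Matrix.map_mul (f := Complex.ofRealHom)

lemma map_neg_ofReal {k l : ℕ} (M : Matrix (Fin k) (Fin l) ℝ) :
    (-M).map Complex.ofReal = -(M.map Complex.ofReal) := by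
  ext i j; simp

lemma map_add_ofReal {k l : ℕ} (L M : Matrix (Fin k) (Fin l) ℝ) :
    (L + M).map Complex.ofReal = L.map Complex.ofReal + M.map Complex.ofReal := by
  ext i j; simp

/-- If `Q ≻ 0` and `QAᵀ + AQ − 2BBᵀ ≺ 0`, then `A − BBᵀQ⁻¹` is Hurwitz. -/
theorem state_feedback_hurwitz {n m : ℕ}
    (A : Matrix (Fin n) (Fin n) ℝ) (B : Matrix (Fin n) (Fin m) ℝ)
    (Q : Matrix (Fin n) (Fin n) ℝ) (hQ : Q.PosDef)
    (hlyap : (-(Q * A.transpose + A * Q - (2 : ℝ) • (B * B.transpose))).PosDef) :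
    ∀ μ : ℂ, μ ∈ spectrum ℂ ((A - B * B.transpose * Q⁻¹).map (Complex.ofReal)) →
      μ.re < 0 := by
  intro μ hμ
  set S : Matrix (Fin n) (Fin n) ℝ := -(Q * Aᵀ + A * Q - (2 : ℝ) • (B * Bᵀ)) with hSdef
  set K : Matrix (Fin n) (Fin n) ℝ := A - B * Bᵀ * Q⁻¹ with hKdef
  have hdet : IsUnit Q.det := isUnit_iff_ne_zero.mpr hQ.det_pos.ne'
  have hQinv : Q⁻¹ * Q = 1 := nonsing_inv_mul Q hdet
  have hQQinv : Q * Q⁻¹ = 1 := mul_nonsing_inv Q hdet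
  have hQsymm : Qᵀ = Q := hQ.1
  -- the Lyapunov identity over ℝ
  have hKQ : K * Q + Q * Kᵀ = -S := by
    have h1 : Kᵀ = Aᵀ - Q⁻¹ * (B * Bᵀ) := by
      rw [hKdef, transpose_sub, transpose_mul, transpose_mul, transpose_nonsing_inv,
        hQsymm, transpose_transpose]
    have h2 : K * Q = A * Q - B * Bᵀ := by
      rw [hKdef, Matrix.sub_mul, Matrix.mul_assoc, hQinv, Matrix.mul_one]
    have h3 : Q * Kᵀ = Q * Aᵀ - B * Bᵀ := by
      rw [h1, Matrix.mul_sub, ← Matrix.mul_assoc, hQQinv, Matrix.one_mul]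
    rw [h2, h3, hSdef]
    rw [two_smul]
    abel
  -- complexify
  set Kc := K.map Complex.ofReal with hKc
  set Qc := Q.map Complex.ofReal with hQc
  set Sc := S.map Complex.ofReal with hSc
  have hmapKQ : Kc * Qc + Qc * Kcᵀ = -Sc := by
    have h6 := congrArg (fun M => M.map (Complex.ofReal : ℝ → ℂ)) hKQ
    simp only [map_add_ofReal, map_mul_ofReal, map_neg_ofReal, Matrix.transpose_map] at h6
    exact h6
  -- eigenvector of the transpose
  rw [spectrum.mem_iff, Matrix.isUnit_iff_isUnit_det, isUnit_iff_ne_zero, not_not] at hμ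
  obtain ⟨v, hv0, hv⟩ := (Matrix.exists_vecMul_eq_zero_iff).mpr hμ
  have heig : v ᵥ* Kc = μ • v := by
    have : v ᵥ* (algebraMap ℂ (Matrix (Fin n) (Fin n) ℂ) μ) - v ᵥ* Kc = 0 := by
      rw [← Matrix.vecMul_sub]; exact hv
    have h4 : v ᵥ* (algebraMap ℂ (Matrix (Fin n) (Fin n) ℂ) μ) = μ • v := by
      rw [Algebra.algebraMap_eq_smul_one]
      ext j
      simp [Matrix.vecMul, dotProduct, Matrix.one_apply, mul_comm]
    rw [h4] at this
    exact (sub_eq_zero.mp this).symm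
  have hconj : star v ᵥ* Kc = (starRingEnd ℂ μ) • star v := by
    funext j
    have h5 := congrArg (starRingEnd ℂ) (congrFun heig j)
    simp only [Matrix.vecMul, dotProduct, map_sum, _root_.map_mul, Pi.smul_apply, smul_eq_mul] at h5 ⊢
    simpa [hKc, Matrix.map_apply, Complex.conj_ofReal] using h5
  have hE : star v ⬝ᵥ ((Kc * Qc + Qc * Kcᵀ) *ᵥ v) = ((starRingEnd ℂ) μ + μ) * (star v ⬝ᵥ (Qc *ᵥ v)) := by
    rw [Matrix.add_mulVec, dotProduct_add]
    have t1 : star v ⬝ᵥ ((Kc * Qc) *ᵥ v) = (starRingEnd ℂ) μ * (star v ⬝ᵥ (Qc *ᵥ v)) := by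
      rw [← Matrix.mulVec_mulVec, Matrix.dotProduct_mulVec, hconj, smul_dotProduct]
      rfl
    have t2 : star v ⬝ᵥ ((Qc * Kcᵀ) *ᵥ v) = μ * (star v ⬝ᵥ (Qc *ᵥ v)) := by
      rw [← Matrix.mulVec_mulVec, Matrix.mulVec_transpose, heig, Matrix.mulVec_smul,
        dotProduct_smul]
      rfl
    rw [t1, t2]; ring
  have hEneg : (star v ⬝ᵥ ((Kc * Qc + Qc * Kcᵀ) *ᵥ v)).re < 0 := by
    rw [hmapKQ, Matrix.neg_mulVec, dotProduct_neg, Complex.neg_re, neg_lt_zero]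
    exact re_dotProduct_map_pos hlyap hv0
  rw [hE] at hEneg
  have hsum : (starRingEnd ℂ) μ + μ = ((2 * μ.re : ℝ) : ℂ) := by
    rw [add_comm, Complex.add_conj]
  rw [hsum] at hEneg
  have hcre : ((((2 * μ.re : ℝ) : ℂ)) * (star v ⬝ᵥ (Qc *ᵥ v))).re
      = (2 * μ.re) * (star v ⬝ᵥ (Qc *ᵥ v)).re := by
    simp [Complex.mul_re]
  rw [hcre] at hEneg
  have hQre : 0 < (star v ⬝ᵥ (Qc *ᵥ v)).re := re_dotProduct_map_pos hQ hv0
  nlinarith [hEneg, hQre]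
end
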